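/- For a deterministic unary two-way automaton with state set Q and for any S ⊆ Q, the relation Reach_S = {(N, s, s', p, p', T) : on the tape {0,…,N+1}, starting in configuration (s,p), the automaton reaches (s',p') at time T without visiting positions 0 or N+1 at any time 0 < t < T and without entering a state of S at any time 0 < t < T} is definable by a Presburger (first-order Presburger arithmetic) formula in the numeric variables N, p, p', T, for each fixed pair of states (s, s'). -/

import Mathlib

/-- Tape symbols: left endmarker, the unary letter, right endmarker. -/
inductive TapeSym : Type
  | lmark | a | rmark

/-- A linear subset of ℕᵏ. -/
def IsLinearSet' {k : ℕ} (S : Set (Fin k → ℕ)) : Prop :=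
  ∃ (m : ℕ) (a : Fin k → ℕ) (b : Fin m → Fin k → ℕ),
    S = {v | ∃ c : Fin m → ℕ, v = a + ∑ j, c j • b j}

/-- A semilinear (equivalently, Presburger-definable) subset of ℕᵏ. -/
def IsSemilinearSet' {k : ℕ} (S : Set (Fin k → ℕ)) : Prop :=
  ∃ (m : ℕ) (f : Fin m → Set (Fin k → ℕ)),
    (∀ i, IsLinearSet' (f i)) ∧ S = ⋃ i, f i

/-- Eventually periodic subset of ℕ. -/
def EventuallyPeriodic (L : Set ℕ) : Prop :=
  ∃ n₀ p : ℕ, 1 ≤ p ∧ ∀ n, n₀ ≤ n → (n ∈ L ↔ n + p ∈ L)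

/-- The unary language {aⁿ : n ∈ L} is regular. -/
def UnaryRegular (L : Set ℕ) : Prop :=
  ∃ (σ : Type) (_ : Fintype σ) (dfa : DFA Unit σ),
    ∀ n : ℕ, List.replicate n () ∈ dfa.accepts ↔ n ∈ L

/-- The symbol scanned at position `p` on the tape `{0, …, N+1}`. -/
def symAt (N : ℕ) (p : ℤ) : TapeSym :=
  if p ≤ 0 then TapeSym.lmark else if (N : ℤ) + 1 ≤ p then TapeSym.rmark else TapeSym.a

/-- One step of a deterministic two-way unary automaton on the tape `{0, …, N+1}`. -/
def tstep {Q : Type} (δ : Q → TapeSym → Q × ℤ) (N : ℕ) (c : Q × ℤ) : Q × ℤ :=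
  ((δ c.1 (symAt N c.2)).1, c.2 + (δ c.1 (symAt N c.2)).2)

/-- The run after `t` steps from configuration `(s, p)` on the tape `{0, …, N+1}`. -/
def trun {Q : Type} (δ : Q → TapeSym → Q × ℤ) (N : ℕ) (s : Q) (p : ℤ) (t : ℕ) : Q × ℤ :=
  (tstep δ N)^[t] (s, p)

/-- One step of the free run (two-way infinite unary tape, no endmarkers). -/
def freeStep {Q : Type} (δa : Q → Q × ℤ) (c : Q × ℤ) : Q × ℤ :=
  ((δa c.1).1, c.2 + (δa c.1).2)

/-- The free run from state `s` (displacement measured from the start). -/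
def freeRun {Q : Type} (δa : Q → Q × ℤ) (s : Q) (t : ℕ) : Q × ℤ :=
  (freeStep δa)^[t] (s, 0)

/-- The amplitude of a state `s`: the width of the range of displacements along
the first loop of its free run (which is contained in the first `|Q| + 1` steps). -/
noncomputable def amplitude {Q : Type} [Fintype Q] (δa : Q → Q × ℤ) (s : Q) : ℤ :=
  ((Finset.range (Fintype.card Q + 1)).image fun i => (freeRun δa s i).2).max'
      (by simp [Finset.nonempty_range_iff]) -
  ((Finset.range (Fintype.card Q + 1)).image fun i => (freeRun δa s i).2).min'
      (by simp [Finset.nonempty_range_iff])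

set_option linter.unusedSectionVars false
set_option maxHeartbeats 1000000

namespace Stmt7Aux
open Classical Set

variable {V W : Type}

def GLin (S : Set (V → ℕ)) : Prop :=
  ∃ (m : ℕ) (a : V → ℕ) (b : Fin m → V → ℕ),
    S = {v | ∃ c : Fin m → ℕ, v = a + ∑ j, c j • b j}

def GSemi (S : Set (V → ℕ)) : Prop :=
  ∃ (m : ℕ) (f : Fin m → Set (V → ℕ)), (∀ i, GLin (f i)) ∧ S = ⋃ i, f i


lemma gsemi_iUnion_lin {κ : Type} [Fintype κ] {f : κ → Set (V → ℕ)} (h : ∀ k, GLin (f k)) :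
    GSemi (⋃ k, f k) := by
  classical
  refine ⟨Fintype.card κ, fun i => f ((Fintype.equivFin κ).symm i), fun i => h _, ?_⟩
  exact (Function.Surjective.iUnion_comp (Fintype.equivFin κ).symm.surjective f).symm

lemma gsemi_iUnion {κ : Type} [Fintype κ] {f : κ → Set (V → ℕ)} (h : ∀ k, GSemi (f k)) :
    GSemi (⋃ k, f k) := by
  classical
  choose m g hg hU using h
  have : (⋃ k, f k) = ⋃ p : Σ k, Fin (m k), g p.1 p.2 := by
    rw [Set.iUnion_sigma]
    exact Set.iUnion_congr hU
  rw [this]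
  exact gsemi_iUnion_lin (fun p => hg p.1 p.2)

lemma gsemi_union {S T : Set (V → ℕ)} (hS : GSemi S) (hT : GSemi T) : GSemi (S ∪ T) := by
  rw [Set.union_eq_iUnion]
  exact gsemi_iUnion (by rintro (_|_) <;> simpa)

lemma glin_image_precomp {S : Set (V → ℕ)} (g : W → V) (h : GLin S) :
    GLin ((fun x => x ∘ g) '' S) := by
  obtain ⟨m, a, b, rfl⟩ := h
  refine ⟨m, a ∘ g, fun j => b j ∘ g, ?_⟩
  ext w
  constructor
  · rintro ⟨x, ⟨c, rfl⟩, rfl⟩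
    refine ⟨c, ?_⟩
    funext i
    simp [Finset.sum_apply]
  · rintro ⟨c, rfl⟩
    refine ⟨a + ∑ j, c j • b j, ⟨c, rfl⟩, ?_⟩
    funext i
    simp [Finset.sum_apply]

lemma gsemi_image_precomp {S : Set (V → ℕ)} (g : W → V) (h : GSemi S) :
    GSemi ((fun x => x ∘ g) '' S) := by
  obtain ⟨m, f, hf, rfl⟩ := h
  rw [Set.image_iUnion]
  exact gsemi_iUnion_lin (fun i => glin_image_precomp g (hf i))


variable [Fintype V] {ι : Type}

def lval (A : ι → V → ℤ) (j : ι) (x : V → ℕ) : ℤ := ∑ v, A j v * (x v : ℤ)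

def EqSol (A : ι → V → ℤ) (c : ι → ℤ) : Set (V → ℕ) := {x | ∀ j, lval A j x + c j = 0}

def IneqSol (A : ι → V → ℤ) (c : ι → ℤ) : Set (V → ℕ) := {x | ∀ j, 0 ≤ lval A j x + c j}

lemma lval_add (A : ι → V → ℤ) (j : ι) (x y : V → ℕ) :
    lval A j (x + y) = lval A j x + lval A j y := by
  simp only [lval, Pi.add_apply]
  rw [← Finset.sum_add_distrib]
  congr 1; funext v; push_cast; ring

lemma lval_sub (A : ι → V → ℤ) (j : ι) {x m : V → ℕ} (h : m ≤ x) :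
    lval A j (x - m) = lval A j x - lval A j m := by
  simp only [lval, Pi.sub_apply]
  rw [← Finset.sum_sub_distrib]
  congr 1; funext v
  have hv : m v ≤ x v := h v
  have hc : ((x v - m v : ℕ) : ℤ) = (x v : ℤ) - m v := by omega
  rw [hc]; ring

lemma lval_smul (A : ι → V → ℤ) (j : ι) (n : ℕ) (x : V → ℕ) :
    lval A j (n • x) = n * lval A j x := by
  simp only [lval, Pi.smul_apply, smul_eq_mul]
  rw [Finset.mul_sum]
  congr 1; funext v; push_cast; ring

lemma lval_sum (A : ι → V → ℤ) (j : ι) {κ : Type} (s : Finset κ) (f : κ → V → ℕ) :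
    lval A j (∑ i ∈ s, f i) = ∑ i ∈ s, lval A j (f i) := by
  classical
  induction s using Finset.induction_on with
  | empty => simp [lval]
  | insert a s hns ih => rw [Finset.sum_insert hns, lval_add, ih, Finset.sum_insert hns]

lemma add_mem_eqsol {A : ι → V → ℤ} {c : ι → ℤ} {x h : V → ℕ}
    (hx : x ∈ EqSol A c) (hh : h ∈ EqSol A 0) : x + h ∈ EqSol A c := by
  intro j
  have := hx j; have h2 := hh j
  simp only [Pi.zero_apply, add_zero] at h2
  rw [lval_add]; omega

lemma exists_min_le (A : Set (V → ℕ)) (x : V → ℕ) (hx : x ∈ A) :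
    ∃ m ∈ A, m ≤ x ∧ ∀ y ∈ A, y ≤ m → y = m := by
  let s : Set ℕ := {n | ∃ z ∈ A, z ≤ x ∧ ∑ v, z v = n}
  have hne : s.Nonempty := ⟨∑ v, x v, x, hx, le_rfl, rfl⟩
  obtain ⟨m, hmA, hmx, hsum⟩ := Nat.sInf_mem hne
  refine ⟨m, hmA, hmx, fun y hyA hym => ?_⟩
  have h1 : sInf s ≤ ∑ v, y v := Nat.sInf_le ⟨y, hyA, hym.trans hmx, rfl⟩
  have h2 : ∑ v, y v ≤ ∑ v, m v := Finset.sum_le_sum (fun v _ => hym v)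
  have h3 : ∑ v, y v = ∑ v, m v := le_antisymm h2 (by omega)
  funext v
  exact (Finset.sum_eq_sum_iff_of_le (fun v _ => hym v)).1 h3 v (Finset.mem_univ v)

def minimalsOf (A : Set (V → ℕ)) : Set (V → ℕ) := {m | m ∈ A ∧ ∀ y ∈ A, y ≤ m → y = m}

lemma minimalsOf_finite (A : Set (V → ℕ)) : (minimalsOf A).Finite := by
  have hpwo : (minimalsOf A).IsPWO := Set.isPWO_of_wellQuasiOrderedLE (minimalsOf A)
  refine IsAntichain.finite_of_partiallyWellOrderedOn ?_ hpwo
  intro m hm m' hm' hne hle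
  exact hne (hm'.2 m hm.1 hle)

lemma hom_decomp (A : ι → V → ℤ) :
    ∀ h ∈ EqSol A 0, ∃ cc : (V → ℕ) → ℕ,
      h = ∑ g ∈ (minimalsOf_finite {z | z ∈ EqSol A 0 ∧ z ≠ 0}).toFinset, cc g • g := by
  classical
  set H := (minimalsOf_finite {z | z ∈ EqSol A 0 ∧ z ≠ 0}).toFinset with hH
  suffices key : ∀ n (h : V → ℕ), h ∈ EqSol A 0 → (∑ v, h v) = n →
      ∃ cc : (V → ℕ) → ℕ, h = ∑ g ∈ H, cc g • g by
    intro h hh; exact key _ h hh rfl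
  intro n
  induction n using Nat.strong_induction_on with
  | _ n ih =>
    intro h hh hsum
    by_cases h0 : h = 0
    · exact ⟨0, by simp [h0]⟩
    · obtain ⟨m, hmA, hmh, hmin⟩ :=
        exists_min_le {z | z ∈ EqSol A 0 ∧ z ≠ 0} h ⟨hh, h0⟩
      have hmH : m ∈ H := by
        rw [hH, Set.Finite.mem_toFinset]
        exact ⟨hmA, hmin⟩
      have hm0 : m ≠ 0 := hmA.2
      have hsub : h - m ∈ EqSol A 0 := by
        intro j
        have := hmA.1 j; have h2 := hh j
        rw [lval_sub A j hmh]
        simp only [Pi.zero_apply, add_zero] at *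
        omega
      have hmpos : 0 < ∑ v, m v := by
        rcases Nat.eq_zero_or_pos (∑ v, m v) with h' | h'
        · exact absurd (funext fun v => Finset.sum_eq_zero_iff.mp h' v (Finset.mem_univ v)) hm0
        · exact h'
      have hkey : (∑ v, m v) + ∑ v, (h - m) v = ∑ v, h v := by
        rw [← Finset.sum_add_distrib]
        refine Finset.sum_congr rfl (fun v _ => ?_)
        have hv : m v ≤ h v := hmh v
        simp only [Pi.sub_apply]
        omega
      have hlt : (∑ v, (h - m) v) < n := by omega
      obtain ⟨cc, hcc⟩ := ih _ hlt (h - m) hsub rfl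
      refine ⟨fun g => cc g + (if g = m then 1 else 0), ?_⟩
      have hsplit : ∑ g ∈ H, (cc g + if g = m then 1 else 0) • g
          = (∑ g ∈ H, cc g • g) + ∑ g ∈ H, (if g = m then 1 else 0) • g := by
        rw [← Finset.sum_add_distrib]
        exact Finset.sum_congr rfl (fun g _ => add_smul _ _ _)
      have hind : ∑ g ∈ H, (if g = m then (1:ℕ) else 0) • g = m := by
        have : ∀ g ∈ H, (if g = m then (1:ℕ) else 0) • g = if g = m then g else 0 := by
          intro g _; split <;> simp
        rw [Finset.sum_congr rfl this, Finset.sum_ite_eq' H m (fun g => g)]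
        simp [hmH]
      rw [hsplit, hind, ← hcc]
      funext v
      have hv : m v ≤ h v := hmh v
      simp only [Pi.add_apply, Pi.sub_apply]
      omega

theorem eqsol_gsemi (A : ι → V → ℤ) (c : ι → ℤ) : GSemi (EqSol A c) := by
  classical
  set H := (minimalsOf_finite {z | z ∈ EqSol A 0 ∧ z ≠ 0}).toFinset with hHdef
  set M := (minimalsOf_finite (EqSol A c)).toFinset with hMdef
  have hHmem : ∀ g ∈ H, g ∈ EqSol A 0 := by
    intro g hg; rw [hHdef, Set.Finite.mem_toFinset] at hg; exact hg.1.1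
  refine ⟨M.card, fun i => {v | ∃ cc : Fin H.card → ℕ,
      v = ((M.equivFin.symm i : _) : V → ℕ) + ∑ j, cc j • ((H.equivFin.symm j : _) : V → ℕ)},
    fun i => ⟨H.card, _, fun j => _, rfl⟩, ?_⟩
  ext x
  simp only [Set.mem_iUnion, Set.mem_setOf_eq]
  constructor
  · intro hx
    obtain ⟨m, hmA, hmx, hmin⟩ := exists_min_le (EqSol A c) x hx
    have hmM : m ∈ M := by rw [hMdef, Set.Finite.mem_toFinset]; exact ⟨hmA, hmin⟩
    have hsub : x - m ∈ EqSol A 0 := by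
      intro j
      have h1 := hx j; have h2 := hmA j
      rw [lval_sub A j hmx]
      simp only [Pi.zero_apply, add_zero]
      omega
    obtain ⟨cc, hcc⟩ := hom_decomp A _ hsub
    refine ⟨M.equivFin ⟨m, hmM⟩, fun j => cc ((H.equivFin.symm j : _) : V → ℕ), ?_⟩
    rw [Equiv.symm_apply_apply]
    have hsum : ∑ j, cc ((H.equivFin.symm j : _) : V → ℕ) • ((H.equivFin.symm j : _) : V → ℕ)
        = ∑ g ∈ H, cc g • g := by
      rw [← Finset.sum_coe_sort H (fun g => cc g • g)]
      exact Equiv.sum_comp H.equivFin.symm (fun (g : H) => cc (g : V → ℕ) • (g : V → ℕ))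
    rw [hsum, ← hcc]
    funext v
    have hv : m v ≤ x v := hmx v
    simp only [Pi.add_apply, Pi.sub_apply]
    omega
  · rintro ⟨i, cc, rfl⟩
    have hm : ((M.equivFin.symm i : _) : V → ℕ) ∈ EqSol A c := by
      have h2 := (M.equivFin.symm i).2
      have h3 := (Set.Finite.mem_toFinset (minimalsOf_finite (EqSol A c))).mp h2
      exact h3.1
    refine add_mem_eqsol hm ?_
    intro j
    rw [lval_sum]
    simp only [Pi.zero_apply, add_zero]
    refine Finset.sum_eq_zero (fun k _ => ?_)
    rw [lval_smul]
    have hg : ((H.equivFin.symm k : _) : V → ℕ) ∈ EqSol A 0 := hHmem _ (H.equivFin.symm k).2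
    have h3 := hg j
    simp only [Pi.zero_apply, add_zero] at h3
    rw [h3, mul_zero]

theorem ineqsol_gsemi [Fintype ι] (A : ι → V → ℤ) (c : ι → ℤ) : GSemi (IneqSol A c) := by
  classical
  set A' : ι → (V ⊕ ι) → ℤ := fun j => Sum.elim (A j) (fun j' => if j' = j then -1 else 0)
    with hA'
  have hval : ∀ (j : ι) (x' : (V ⊕ ι) → ℕ),
      lval A' j x' = lval A j (x' ∘ Sum.inl) - (x' (Sum.inr j) : ℤ) := by
    intro j x'
    simp only [lval, hA', Fintype.sum_sum_type, Sum.elim_inl, Sum.elim_inr, Function.comp_apply]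
    have h2 : ∑ j' : ι, (if j' = j then (-1 : ℤ) else 0) * (x' (Sum.inr j') : ℤ)
        = -(x' (Sum.inr j) : ℤ) := by
      simp [Finset.sum_ite_eq', ite_mul]
    rw [h2]; ring
  have himg : IneqSol A c = (fun x => x ∘ Sum.inl) '' EqSol A' c := by
    ext x
    constructor
    · intro hx
      refine ⟨Sum.elim x (fun j => (lval A j x + c j).toNat), fun j => ?_, by funext v; rfl⟩
      rw [hval]
      have hc : Sum.elim x (fun j => (lval A j x + c j).toNat) ∘ Sum.inl = x := by
        funext v; rfl
      rw [hc]
      have h4 : ((Sum.elim x (fun j => (lval A j x + c j).toNat) (Sum.inr j) : ℕ) : ℤ)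
          = lval A j x + c j := by
        simp only [Sum.elim_inr]
        exact Int.toNat_of_nonneg (hx j)
      rw [h4]; ring
    · rintro ⟨x', hx', rfl⟩
      intro j
      have h5 := hx' j
      rw [hval] at h5
      have h6 : (0:ℤ) ≤ (x' (Sum.inr j) : ℤ) := Int.ofNat_nonneg _
      show (0:ℤ) ≤ lval A j (x' ∘ Sum.inl) + c j
      omega
  rw [himg]
  exact gsemi_image_precomp _ (eqsol_gsemi A' c)


def SysDef (S : Set (V → ℕ)) : Prop :=
  ∃ (ι : Type) (_ : Fintype ι) (A : ι → V → ℤ) (c : ι → ℤ), S = IneqSol A c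

lemma SysDef.gsemi {S : Set (V → ℕ)} (h : SysDef S) : GSemi S := by
  obtain ⟨ι, _, A, c, rfl⟩ := h; exact ineqsol_gsemi A c

lemma sysdef_congr {S T : Set (V → ℕ)} (h : S = T) (hT : SysDef T) : SysDef S := h ▸ hT

lemma sysdef_univ : SysDef (Set.univ : Set (V → ℕ)) :=
  ⟨Empty, inferInstance, fun j => j.elim, fun j => j.elim, by ext x; simp [IneqSol]⟩

lemma sysdef_empty : SysDef (∅ : Set (V → ℕ)) :=
  ⟨Unit, inferInstance, fun _ => 0, fun _ => -1, by ext x; simp [IneqSol, lval]⟩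

lemma sysdef_const (P : Prop) : SysDef {x : V → ℕ | P} := by
  by_cases h : P
  · exact sysdef_congr (by ext x; simp [h]) sysdef_univ
  · exact sysdef_congr (by ext x; simp [h]) sysdef_empty

lemma sysdef_iInter {κ : Type} [Fintype κ] {f : κ → Set (V → ℕ)} (h : ∀ k, SysDef (f k)) :
    SysDef (⋂ k, f k) := by
  classical
  choose ι fι A c hf using h
  haveI : ∀ k, Fintype (ι k) := fι
  refine ⟨Σ k, ι k, inferInstance, fun p => A p.1 p.2, fun p => c p.1 p.2, ?_⟩
  ext x
  simp only [Set.mem_iInter, IneqSol, Set.mem_setOf_eq, Sigma.forall]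
  refine forall_congr' (fun k => ?_)
  rw [hf k]
  rfl

lemma sysdef_inter {S T : Set (V → ℕ)} (hS : SysDef S) (hT : SysDef T) : SysDef (S ∩ T) := by
  have h : S ∩ T = ⋂ b : Bool, (if b then S else T) := by
    ext x; simp [Bool.forall_bool, and_comm]
  rw [h]
  exact sysdef_iInter (by rintro (_|_) <;> simpa)

lemma sysdef_forall_lt (M : ℕ) (f : ℕ → Set (V → ℕ)) (h : ∀ k, SysDef (f k)) :
    SysDef {x | ∀ k, k < M → x ∈ f k} := by
  have he : {x : V → ℕ | ∀ k, k < M → x ∈ f k} = ⋂ k : Fin M, f k := by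
    ext x; simp only [Set.mem_iInter, Set.mem_setOf_eq]
    exact ⟨fun H k => H k k.2, fun H k hk => H ⟨k, hk⟩⟩
  rw [he]; exact sysdef_iInter (fun k => h k)

lemma sysdef_half (α : V → ℤ) (γ : ℤ) :
    SysDef {x : V → ℕ | 0 ≤ (∑ v, α v * (x v : ℤ)) + γ} :=
  ⟨Unit, inferInstance, fun _ => α, fun _ => γ, by ext x; simp [IneqSol, lval]⟩

lemma sysdef_and {P R : (V → ℕ) → Prop} (hP : SysDef {x | P x}) (hR : SysDef {x | R x}) :
    SysDef {x | P x ∧ R x} :=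
  sysdef_congr (by ext x; simp only [Set.mem_inter_iff, Set.mem_setOf_eq]) (sysdef_inter hP hR)

lemma sysdef_atom4 (c0 c1 c2 c3 γ : ℤ) :
    SysDef {v : Fin 4 → ℕ |
      0 ≤ c0 * (v 0 : ℤ) + c1 * (v 1 : ℤ) + c2 * (v 2 : ℤ) + c3 * (v 3 : ℤ) + γ} := by
  refine sysdef_congr ?_ (sysdef_half (![c0, c1, c2, c3]) γ)
  ext v
  have h : (∑ i, ![c0, c1, c2, c3] i * ((v i : ℕ) : ℤ))
      = c0 * (v 0 : ℤ) + c1 * (v 1 : ℤ) + c2 * (v 2 : ℤ) + c3 * (v 3 : ℤ) := by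
    simp [Fin.sum_univ_four]
    try ring
  simp only [Set.mem_setOf_eq, h]

lemma sysdef_eq4 (c0 c1 c2 c3 γ : ℤ) :
    SysDef {v : Fin 4 → ℕ |
      c0 * (v 0 : ℤ) + c1 * (v 1 : ℤ) + c2 * (v 2 : ℤ) + c3 * (v 3 : ℤ) + γ = 0} := by
  refine sysdef_congr ?_
    (sysdef_and (sysdef_atom4 c0 c1 c2 c3 γ) (sysdef_atom4 (-c0) (-c1) (-c2) (-c3) (-γ)))
  ext v
  simp only [Set.mem_setOf_eq, neg_mul]
  constructor
  · intro h; exact ⟨by linarith, by linarith⟩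
  · rintro ⟨h1, h2⟩; linarith

abbrev V5 := (Fin 4) ⊕ Unit

lemma sysdef_atom5 (c0 c1 c2 c3 c4 γ : ℤ) :
    SysDef {w : V5 → ℕ |
      0 ≤ c0 * (w (Sum.inl 0) : ℤ) + c1 * (w (Sum.inl 1) : ℤ) + c2 * (w (Sum.inl 2) : ℤ)
        + c3 * (w (Sum.inl 3) : ℤ) + c4 * (w (Sum.inr ()) : ℤ) + γ} := by
  refine sysdef_congr ?_ (sysdef_half (Sum.elim (![c0, c1, c2, c3]) (fun _ => c4)) γ)
  ext w
  have h : (∑ u : V5, Sum.elim (![c0, c1, c2, c3]) (fun _ => c4) u * ((w u : ℕ) : ℤ))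
      = c0 * (w (Sum.inl 0) : ℤ) + c1 * (w (Sum.inl 1) : ℤ) + c2 * (w (Sum.inl 2) : ℤ)
        + c3 * (w (Sum.inl 3) : ℤ) + c4 * (w (Sum.inr ()) : ℤ) := by
    simp [Fintype.sum_sum_type, Fin.sum_univ_four]
    try ring
  simp only [Set.mem_setOf_eq, h]

lemma sysdef_eq5 (c0 c1 c2 c3 c4 γ : ℤ) :
    SysDef {w : V5 → ℕ |
      c0 * (w (Sum.inl 0) : ℤ) + c1 * (w (Sum.inl 1) : ℤ) + c2 * (w (Sum.inl 2) : ℤ)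
        + c3 * (w (Sum.inl 3) : ℤ) + c4 * (w (Sum.inr ()) : ℤ) + γ = 0} := by
  refine sysdef_congr ?_
    (sysdef_and (sysdef_atom5 c0 c1 c2 c3 c4 γ)
      (sysdef_atom5 (-c0) (-c1) (-c2) (-c3) (-c4) (-γ)))
  ext w
  simp only [Set.mem_setOf_eq, neg_mul]
  constructor
  · intro h; exact ⟨by linarith, by linarith⟩
  · rintro ⟨h1, h2⟩; linarith


section Runs
variable {Q : Type}

lemma trun_succ (δ : Q → TapeSym → Q × ℤ) (N : ℕ) (s : Q) (p : ℤ) (t : ℕ) :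
    trun δ N s p (t + 1) = tstep δ N (trun δ N s p t) :=
  Function.iterate_succ_apply' _ _ _

lemma freeRun_zero (δa : Q → Q × ℤ) (s : Q) : freeRun δa s 0 = (s, 0) := rfl

lemma freeRun_succ (δa : Q → Q × ℤ) (s : Q) (k : ℕ) :
    freeRun δa s (k + 1)
      = ((δa (freeRun δa s k).1).1, (freeRun δa s k).2 + (δa (freeRun δa s k).1).2) := by
  rw [freeRun, Function.iterate_succ_apply']; rfl

lemma freeStep_iter (δa : Q → Q × ℤ) (q : Q) (z : ℤ) (t : ℕ) :
    (freeStep δa)^[t] (q, z) = ((freeRun δa q t).1, z + (freeRun δa q t).2) := by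
  induction t with
  | zero => simp [freeRun_zero]
  | succ t ih =>
    rw [Function.iterate_succ_apply', ih, freeRun_succ]
    simp only [freeStep]
    exact Prod.ext rfl (by ring)

lemma freeRun_add (δa : Q → Q × ℤ) (s : Q) (u t : ℕ) :
    freeRun δa s (u + t)
      = ((freeRun δa (freeRun δa s u).1 t).1,
         (freeRun δa s u).2 + (freeRun δa (freeRun δa s u).1 t).2) := by
  have h := freeStep_iter δa (freeRun δa s u).1 (freeRun δa s u).2 t
  rw [freeRun, add_comm u t, Function.iterate_add_apply]
  rw [show (freeStep δa)^[u] (s, 0) = freeRun δa s u from rfl]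
  rw [show freeRun δa s u = ((freeRun δa s u).1, (freeRun δa s u).2) from rfl] at h ⊢
  exact h

lemma trun_bridge (δ : Q → TapeSym → Q × ℤ) (x : TapeSym) (N : ℕ) (s : Q) (p : ℤ)
    (t₀ : ℕ) (q : Q) (z : ℤ) (h0 : trun δ N s p t₀ = (q, z)) (k : ℕ)
    (hsym : ∀ u, u < k → symAt N (z + (freeRun (fun q' => δ q' x) q u).2) = x) :
    trun δ N s p (t₀ + k)
      = ((freeRun (fun q' => δ q' x) q k).1, z + (freeRun (fun q' => δ q' x) q k).2) := by
  induction k with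
  | zero => simpa [freeRun_zero] using h0
  | succ k ih =>
    have ihh := ih (fun u hu => hsym u (Nat.lt_succ_of_lt hu))
    rw [show t₀ + (k + 1) = (t₀ + k) + 1 from rfl, trun_succ, ihh]
    simp only [tstep]
    rw [hsym k (Nat.lt_succ_self k), freeRun_succ]
    exact Prod.ext rfl (by ring)

lemma freeRun_per (δa : Q → Q × ℤ) (s₁ : Q) (aa ππ : ℕ)
    (h : (freeRun δa s₁ (aa + ππ)).1 = (freeRun δa s₁ aa).1) (n t : ℕ) :
    (freeRun δa s₁ (aa + n * ππ + t)).1 = (freeRun δa s₁ (aa + t)).1 ∧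
    (freeRun δa s₁ (aa + n * ππ + t)).2
      = (freeRun δa s₁ (aa + t)).2
        + n * ((freeRun δa s₁ (aa + ππ)).2 - (freeRun δa s₁ aa).2) := by
  have shift : ∀ m : ℕ, (freeRun δa s₁ (aa + ππ + m)).1 = (freeRun δa s₁ (aa + m)).1 ∧
      (freeRun δa s₁ (aa + ππ + m)).2
        = (freeRun δa s₁ (aa + m)).2
          + ((freeRun δa s₁ (aa + ππ)).2 - (freeRun δa s₁ aa).2) := by
    intro m
    have h1 := freeRun_add δa s₁ (aa + ππ) m
    have h2 := freeRun_add δa s₁ aa m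
    rw [h] at h1
    rw [h1, h2]
    exact ⟨rfl, by ring⟩
  induction n with
  | zero => simp
  | succ n ih =>
    obtain ⟨hs1, hs2⟩ := shift (n * ππ + t)
    have he : aa + (n + 1) * ππ + t = aa + ππ + (n * ππ + t) := by ring
    have he2 : aa + (n * ππ + t) = aa + n * ππ + t := by ring
    rw [he2] at hs1 hs2
    constructor
    · rw [he, hs1]; exact ih.1
    · rw [he, hs2, ih.2]; push_cast; ring

def zoneCond (x : TapeSym) (N : ℕ) (z : ℤ) : Prop :=
  match x with
  | .a => 1 ≤ z ∧ z ≤ (N : ℤ)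
  | .lmark => z ≤ -1
  | .rmark => (N : ℤ) + 2 ≤ z

def initCond (y : TapeSym) (N p : ℕ) : Prop :=
  match y with
  | .lmark => p = 0
  | .a => 1 ≤ p ∧ p ≤ N
  | .rmark => p = N + 1

lemma symAt_l {N : ℕ} {z : ℤ} (h : z ≤ 0) : symAt N z = TapeSym.lmark := by
  simp [symAt, h]

lemma symAt_r {N : ℕ} {z : ℤ} (h : (N : ℤ) + 1 ≤ z) : symAt N z = TapeSym.rmark := by
  rw [symAt, if_neg (by omega), if_pos h]

lemma symAt_a {N : ℕ} {z : ℤ} (h1 : 1 ≤ z) (h2 : z ≤ (N : ℤ)) : symAt N z = TapeSym.a := by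
  rw [symAt, if_neg (by omega), if_neg (by omega)]

lemma zone_sym {x : TapeSym} {N : ℕ} {z : ℤ} (h : zoneCond x N z) : symAt N z = x := by
  cases x with
  | lmark => exact symAt_l (by simp only [zoneCond] at h; omega)
  | a => exact symAt_a h.1 h.2
  | rmark => exact symAt_r (by simp only [zoneCond] at h; omega)

lemma zone_avoid {x : TapeSym} {N : ℕ} {z : ℤ} (h : zoneCond x N z) :
    z ≠ 0 ∧ z ≠ (N : ℤ) + 1 := by
  cases x <;> simp only [zoneCond] at h <;> omega

lemma zone_step {x : TapeSym} {N : ℕ} {z z' : ℤ} (h : zoneCond x N z)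
    (hd1 : -1 ≤ z' - z) (hd2 : z' - z ≤ 1) (h0 : z' ≠ 0) (h1 : z' ≠ (N : ℤ) + 1) :
    zoneCond x N z' := by
  cases x <;> simp only [zoneCond] at h ⊢ <;> omega

lemma zone_total {N : ℕ} {z : ℤ} (h0 : z ≠ 0) (h1 : z ≠ (N : ℤ) + 1) :
    ∃ x, zoneCond x N z := by
  by_cases h : z ≤ -1
  · exact ⟨.lmark, h⟩
  · by_cases h2 : z ≤ (N : ℤ)
    · exact ⟨.a, by simp only [zoneCond]; omega⟩
    · exact ⟨.rmark, by simp only [zoneCond]; omega⟩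

lemma interp_aux (c e : ℤ) (m j : ℕ) (hj : j ≤ m) (h0 : 0 ≤ c) (hm : 0 ≤ c + m * e) :
    0 ≤ c + j * e := by
  rcases le_or_gt 0 e with he | he
  · have : 0 ≤ (j : ℤ) * e := mul_nonneg (by positivity) he
    linarith
  · have h1 : (j : ℤ) ≤ (m : ℤ) := by exact_mod_cast hj
    have : (m : ℤ) * e ≤ (j : ℤ) * e := by nlinarith
    linarith

lemma zone_interp {x : TapeSym} {N : ℕ} (z0 D : ℤ) (m j : ℕ) (hj : j ≤ m)
    (h0 : zoneCond x N z0) (hm : zoneCond x N (z0 + m * D)) : zoneCond x N (z0 + j * D) := by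
  cases x <;> simp only [zoneCond] at h0 hm ⊢
  · have := interp_aux (-1 - z0) (-D) m j hj (by linarith) (by push_cast; linarith)
    push_cast at this ⊢; linarith
  · constructor
    · have := interp_aux (z0 - 1) D m j hj (by linarith) (by push_cast; linarith)
      push_cast at this ⊢; linarith
    · have := interp_aux ((N : ℤ) - z0) (-D) m j hj (by linarith) (by push_cast; linarith)
      push_cast at this ⊢; linarith
  · have := interp_aux (z0 - (N : ℤ) - 2) D m j hj (by linarith) (by push_cast; linarith)
    push_cast at this ⊢; linarith

end Runs


section Main

instance : DecidableEq TapeSym := fun a b => by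
  cases a <;> cases b <;> first | exact isTrue rfl | exact isFalse nofun

instance : Fintype TapeSym :=
  ⟨{TapeSym.lmark, TapeSym.a, TapeSym.rmark}, fun x => by cases x <;> decide⟩

variable {Q : Type} (δ : Q → TapeSym → Q × ℤ) (S : Set Q) (s s' : Q)

def Target : Set (Fin 4 → ℕ) :=
  {v | v 1 ≤ v 0 + 1 ∧ v 2 ≤ v 0 + 1 ∧
    trun δ (v 0) s (v 1) (v 3) = (s', (v 2 : ℤ)) ∧
    ∀ t, 0 < t → t < v 3 →
      (trun δ (v 0) s (v 1) t).2 ≠ 0 ∧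
      (trun δ (v 0) s (v 1) t).2 ≠ (v 0 : ℤ) + 1 ∧
      (trun δ (v 0) s (v 1) t).1 ∉ S}

def FF (x y : TapeSym) (k : ℕ) : ℤ := (freeRun (fun q => δ q x) ((δ s y).1) k).2

def GG (x y : TapeSym) (k : ℕ) : Q := (freeRun (fun q => δ q x) ((δ s y).1) k).1

def T0Set : Set (Fin 4 → ℕ) :=
  {v | v 3 = 0 ∧ v 1 ≤ v 0 + 1 ∧ v 2 ≤ v 0 + 1 ∧ s = s' ∧ v 2 = v 1}

def T1Set (y : TapeSym) : Set (Fin 4 → ℕ) :=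
  {v | v 3 = 1 ∧ v 1 ≤ v 0 + 1 ∧ v 2 ≤ v 0 + 1 ∧ initCond y (v 0) (v 1) ∧
    (δ s y).1 = s' ∧ (v 2 : ℤ) = (v 1 : ℤ) + (δ s y).2}

def CaseSet (x y : TapeSym) : Set (Fin 4 → ℕ) :=
  {v | v 1 ≤ v 0 + 1 ∧ v 2 ≤ v 0 + 1 ∧ initCond y (v 0) (v 1) ∧
    ∃ M : ℕ, 1 ≤ M ∧ v 3 = M + 1 ∧ GG δ s x y M = s' ∧
      (v 2 : ℤ) = (v 1 : ℤ) + (δ s y).2 + FF δ s x y M ∧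
      ∀ k, k < M →
        zoneCond x (v 0) ((v 1 : ℤ) + (δ s y).2 + FF δ s x y k) ∧ GG δ s x y k ∉ S}

def SmallSet (x y : TapeSym) (M : ℕ) : Set (Fin 4 → ℕ) :=
  {v | v 1 ≤ v 0 + 1 ∧ v 2 ≤ v 0 + 1 ∧ initCond y (v 0) (v 1) ∧
    1 ≤ M ∧ v 3 = M + 1 ∧ GG δ s x y M = s' ∧
    (v 2 : ℤ) = (v 1 : ℤ) + (δ s y).2 + FF δ s x y M ∧
    ∀ k, k < M →
      zoneCond x (v 0) ((v 1 : ℤ) + (δ s y).2 + FF δ s x y k) ∧ GG δ s x y k ∉ S}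

def BigSet (x y : TapeSym) (aa ππ r : ℕ) (DD : ℤ) : Set (Fin 4 → ℕ) :=
  {v | v 1 ≤ v 0 + 1 ∧ v 2 ≤ v 0 + 1 ∧ initCond y (v 0) (v 1) ∧
    ∃ n : ℕ, v 3 = aa + ππ + r + 1 + n * ππ ∧ GG δ s x y (aa + r) = s' ∧
      (v 2 : ℤ) = (v 1 : ℤ) + (δ s y).2 + FF δ s x y (aa + r) + DD + n * DD ∧
      (∀ k, k < aa →
        zoneCond x (v 0) ((v 1 : ℤ) + (δ s y).2 + FF δ s x y k) ∧ GG δ s x y k ∉ S) ∧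
      (∀ i, i < ππ → GG δ s x y (aa + i) ∉ S ∧
        zoneCond x (v 0) ((v 1 : ℤ) + (δ s y).2 + FF δ s x y (aa + i)) ∧
        zoneCond x (v 0) ((v 1 : ℤ) + (δ s y).2 + FF δ s x y (aa + i)
          + (if i < r then DD else 0) + n * DD))}

lemma init_sym {y : TapeSym} {N p : ℕ} (h : initCond y N p) : symAt N (p : ℤ) = y := by
  cases y with
  | lmark => rw [show p = 0 from h]; exact symAt_l (by norm_num)
  | a => exact symAt_a (by exact_mod_cast h.1) (by exact_mod_cast h.2)
  | rmark => exact symAt_r (by rw [show p = N + 1 from h]; push_cast; omega)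

lemma target_decomp (hδ : ∀ q x, (δ q x).2 = -1 ∨ (δ q x).2 = 0 ∨ (δ q x).2 = 1) :
    Target δ S s s' =
      (T0Set s s' ∪ ⋃ y, T1Set δ s s' y) ∪ ⋃ x, ⋃ y, CaseSet δ S s s' x y := by
  classical
  ext v
  simp only [Target, T0Set, T1Set, CaseSet, Set.mem_union, Set.mem_iUnion, Set.mem_setOf_eq]
  have hR0 : trun δ (v 0) s (v 1) 0 = (s, (v 1 : ℤ)) := rfl
  constructor
  · rintro ⟨h1, h2, h3, h4⟩
    obtain ⟨y, hsym, hinit⟩ :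
        ∃ y, symAt (v 0) ((v 1 : ℕ) : ℤ) = y ∧ initCond y (v 0) (v 1) := by
      rcases Nat.eq_zero_or_pos (v 1) with h0 | h0
      · exact ⟨.lmark, symAt_l (by omega), by simp only [initCond]; omega⟩
      · rcases Nat.lt_or_ge (v 1) (v 0 + 1) with hlt | hge
        · exact ⟨.a, symAt_a (by omega) (by omega), by simp only [initCond]; omega⟩
        · exact ⟨.rmark, symAt_r (by omega), by simp only [initCond]; omega⟩
    have hstep1 : trun δ (v 0) s (v 1) 1 = ((δ s y).1, (v 1 : ℤ) + (δ s y).2) := by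
      rw [show (1 : ℕ) = 0 + 1 from rfl, trun_succ, hR0]
      simp only [tstep]
      rw [hsym]
    rcases hv3 : v 3 with _ | T1c
    · rw [hv3] at h3
      rw [hR0] at h3
      obtain ⟨hs, hp⟩ := Prod.mk.injEq .. ▸ h3
      exact Or.inl (Or.inl ⟨rfl, h1, h2, hs, by exact_mod_cast hp.symm⟩)
    rcases T1c with _ | Tm
    · rw [hv3] at h3
      rw [hstep1] at h3
      obtain ⟨hs, hp⟩ := Prod.mk.injEq .. ▸ h3
      exact Or.inl (Or.inr ⟨y, by omega, h1, h2, hinit, hs, hp.symm⟩)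
    · -- v 3 = Tm + 2
      have hv3' : v 3 = Tm + 2 := hv3
      have h41 := h4 1 one_pos (by omega)
      rw [hstep1] at h41
      obtain ⟨x, hx⟩ := zone_total h41.1 h41.2.1
      have hz : ∀ k, k ≤ Tm → zoneCond x (v 0) ((trun δ (v 0) s (v 1) (1 + k)).2) := by
        intro k
        induction k with
        | zero => intro _; rw [hstep1]; exact hx
        | succ k ih =>
          intro hk
          have ihh := ih (by omega)
          have hstep : trun δ (v 0) s (v 1) (1 + (k + 1))
              = tstep δ (v 0) (trun δ (v 0) s (v 1) (1 + k)) := by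
            rw [show 1 + (k + 1) = (1 + k) + 1 from rfl, trun_succ]
          have hwall := h4 (1 + (k + 1)) (by omega) (by omega)
          have hdiff := hδ ((trun δ (v 0) s (v 1) (1 + k)).1)
            (symAt (v 0) ((trun δ (v 0) s (v 1) (1 + k)).2))
          refine zone_step ihh ?_ ?_ hwall.1 hwall.2.1 <;> rw [hstep] <;>
            simp only [tstep] <;> omega
      have hb : ∀ k, k ≤ Tm + 1 → trun δ (v 0) s (v 1) (1 + k)
          = (GG δ s x y k, (v 1 : ℤ) + (δ s y).2 + FF δ s x y k) := by
        intro k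
        induction k with
        | zero =>
          intro _
          rw [hstep1]
          exact Prod.ext rfl (by simp only [FF, freeRun_zero]; ring)
        | succ k ih =>
          intro hk
          have ihh := ih (by omega)
          have hzk := hz k (by omega)
          rw [ihh] at hzk
          have hstep : trun δ (v 0) s (v 1) (1 + (k + 1))
              = tstep δ (v 0) (trun δ (v 0) s (v 1) (1 + k)) := by
            rw [show 1 + (k + 1) = (1 + k) + 1 from rfl, trun_succ]
          rw [hstep, ihh]
          simp only [tstep]
          rw [zone_sym hzk]
          refine Prod.ext ?_ ?_
          · simp only [GG, FF, freeRun_succ]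
          · simp only [GG, FF, freeRun_succ]
            ring
      have hbM := hb (Tm + 1) le_rfl
      rw [show 1 + (Tm + 1) = Tm + 2 from by omega, ← hv3', h3] at hbM
      obtain ⟨hs, hp⟩ := Prod.mk.injEq .. ▸ hbM.symm
      refine Or.inr ⟨x, y, h1, h2, hinit, Tm + 1, by omega, by omega, hs, hp.symm, ?_⟩
      intro k hk
      have hbk := hb k (by omega)
      constructor
      · have := hz k (by omega)
        rw [hbk] at this
        exact this
      · have h4k := h4 (1 + k) (by omega) (by omega)
        rw [hbk] at h4k
        exact h4k.2.2
  · rintro ((⟨hT, h1, h2, hs, hp⟩ | ⟨y, hT, h1, h2, hinit, hs, hp⟩) |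
      ⟨x, y, h1, h2, hinit, M, hM1, hT, hGM, hp2, hfor⟩)
    · refine ⟨h1, h2, ?_, ?_⟩
      · rw [hT, hR0, hs, hp]
      · intro t ht1 ht2; rw [hT] at ht2; omega
    · have hsym := init_sym hinit
      refine ⟨h1, h2, ?_, ?_⟩
      · rw [hT, show (1 : ℕ) = 0 + 1 from rfl, trun_succ, hR0]
        simp only [tstep]
        rw [hsym, hs, ← hp]
      · intro t ht1 ht2; rw [hT] at ht2; omega
    · have hsym := init_sym hinit
      have hstep1 : trun δ (v 0) s (v 1) 1 = ((δ s y).1, (v 1 : ℤ) + (δ s y).2) := by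
        rw [show (1 : ℕ) = 0 + 1 from rfl, trun_succ, hR0]
        simp only [tstep]
        rw [hsym]
      have hb : ∀ k, k ≤ M → trun δ (v 0) s (v 1) (1 + k)
          = (GG δ s x y k, (v 1 : ℤ) + (δ s y).2 + FF δ s x y k) := by
        intro k
        induction k with
        | zero =>
          intro _
          rw [hstep1]
          exact Prod.ext rfl (by simp only [FF, freeRun_zero]; ring)
        | succ k ih =>
          intro hk
          have ihh := ih (by omega)
          have hzk := (hfor k (by omega)).1
          have hstep : trun δ (v 0) s (v 1) (1 + (k + 1))
              = tstep δ (v 0) (trun δ (v 0) s (v 1) (1 + k)) := by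
            rw [show 1 + (k + 1) = (1 + k) + 1 from rfl, trun_succ]
          rw [hstep, ihh]
          simp only [tstep]
          rw [zone_sym hzk]
          refine Prod.ext ?_ ?_
          · simp only [GG, FF, freeRun_succ]
          · simp only [GG, FF, freeRun_succ]
            ring
      refine ⟨h1, h2, ?_, ?_⟩
      · rw [hT, show M + 1 = 1 + M from by omega, hb M le_rfl, hGM, ← hp2]
      · intro t ht1 ht2
        rw [hT] at ht2
        have hteq : t = 1 + (t - 1) := by omega
        have hbk := hb (t - 1) (by omega)
        rw [hteq, hbk]
        have hzk := (hfor (t - 1) (by omega)).1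
        have hSk := (hfor (t - 1) (by omega)).2
        exact ⟨(zone_avoid hzk).1, (zone_avoid hzk).2, hSk⟩

lemma zone_congr {x : TapeSym} {N : ℕ} {z z' : ℤ} (h : zoneCond x N z) (he : z = z') :
    zoneCond x N z' := he ▸ h

lemma case_decomp (x y : TapeSym) (aa ππ : ℕ) (hππ : 1 ≤ ππ)
    (hper : GG δ s x y (aa + ππ) = GG δ s x y aa) :
    CaseSet δ S s s' x y =
      (⋃ M : Fin (aa + ππ + 1), SmallSet δ S s s' x y M) ∪
      ⋃ r : Fin ππ, BigSet δ S s s' x y aa ππ (r + 1)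
        (FF δ s x y (aa + ππ) - FF δ s x y aa) := by
  classical
  set DD : ℤ := FF δ s x y (aa + ππ) - FF δ s x y aa with hDD
  have hG : ∀ n t : ℕ, GG δ s x y (aa + n * ππ + t) = GG δ s x y (aa + t) :=
    fun n t => (freeRun_per (fun q => δ q x) ((δ s y).1) aa ππ hper n t).1
  have hF : ∀ n t : ℕ, FF δ s x y (aa + n * ππ + t) = FF δ s x y (aa + t) + n * DD :=
    fun n t => (freeRun_per (fun q => δ q x) ((δ s y).1) aa ππ hper n t).2
  ext v
  simp only [CaseSet, SmallSet, BigSet, Set.mem_union, Set.mem_iUnion, Set.mem_setOf_eq]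
  constructor
  · rintro ⟨h1, h2, h3, M, hM1, hT, hGM, hp2, hfor⟩
    by_cases hsmall : M ≤ aa + ππ
    · exact Or.inl ⟨⟨M, by omega⟩, h1, h2, h3, hM1, hT, hGM, hp2, hfor⟩
    · right
      have hMgt : aa + ππ + 1 ≤ M := by omega
      set u : ℕ := M - aa - 1 with hu
      have hu1 : ππ ≤ u := by omega
      set n' : ℕ := u / ππ with hn'
      set r0 : ℕ := u % ππ with hr0
      have hdm : ππ * n' + r0 = u := Nat.div_add_mod u ππ
      have hr0lt : r0 < ππ := Nat.mod_lt _ (by omega)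
      have hn'1 : 1 ≤ n' := by
        rcases Nat.eq_zero_or_pos n' with h0 | h0
        · rw [h0] at hdm; simp at hdm; omega
        · exact h0
      have hcomm : n' * ππ = ππ * n' := Nat.mul_comm _ _
      have hMeq : M = aa + n' * ππ + (r0 + 1) := by omega
      have hsub : (n' - 1) * ππ + ππ = n' * ππ := by
        have h9 : (n' - 1) * ππ = n' * ππ - ππ := by rw [Nat.sub_one_mul]
        have h10 : ππ ≤ n' * ππ := le_trans (by omega) (Nat.le_mul_of_pos_left ππ (by omega))
        omega
      have hcast : ((n' - 1 : ℕ) : ℤ) = (n' : ℤ) - 1 := by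
        have := hn'1; push_cast [this]; ring
      refine ⟨⟨r0, hr0lt⟩, h1, h2, h3, n' - 1, ?_, ?_, ?_, ?_, ?_⟩
      · simp only []
        omega
      · simp only []
        rw [← hG n' (r0 + 1), ← hMeq]
        exact hGM
      · simp only []
        have h11 := hF n' (r0 + 1)
        rw [← hMeq] at h11
        rw [hp2, h11, hcast]
        ring
      · intro k hk
        exact hfor k (by omega)
      · intro i hi
        simp only []
        have hlt0 : aa + i < M := by omega
        refine ⟨(hfor (aa + i) hlt0).2, (hfor (aa + i) hlt0).1, ?_⟩
        by_cases hir : i < r0 + 1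
        · rw [if_pos hir]
          have hk : aa + n' * ππ + i < M := by omega
          have hz := (hfor (aa + n' * ππ + i) hk).1
          rw [hF n' i] at hz
          exact zone_congr hz (by rw [hcast]; ring)
        · rw [if_neg hir]
          have hklt : (n' - 1) * ππ + i < n' * ππ + (r0 + 1) := by omega
          have hk : aa + (n' - 1) * ππ + i < M := by omega
          have hz := (hfor (aa + (n' - 1) * ππ + i) hk).1
          rw [hF (n' - 1) i] at hz
          exact zone_congr hz (by rw [hcast]; ring)
  · rintro (⟨M, h1, h2, h3, hM1, hT, hGM, hp2, hfor⟩ |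
      ⟨r, h1, h2, h3, n, hT, hGr, hp2, hforA, hforB⟩)
    · exact ⟨h1, h2, h3, M, hM1, hT, hGM, hp2, hfor⟩
    · set rr : ℕ := (r : ℕ) + 1 with hrr
      have hrr1 : 1 ≤ rr := by omega
      have hrrππ : rr ≤ ππ := by have := r.2; omega
      set M : ℕ := aa + (n + 1) * ππ + rr with hM
      have hexp : (n + 1) * ππ = ππ + n * ππ := by ring
      refine ⟨h1, h2, h3, M, by omega, by omega, ?_, ?_, ?_⟩
      · rw [hM, hG (n + 1) rr]
        exact hGr
      · rw [hp2, hM, hF (n + 1) rr]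
        push_cast
        ring
      · intro k hk
        rcases Nat.lt_or_ge k aa with hka | hka
        · exact hforA k hka
        · set i : ℕ := (k - aa) % ππ with hi
          set j : ℕ := (k - aa) / ππ with hj
          have hdm : ππ * j + i = k - aa := Nat.div_add_mod _ _
          have hilt : i < ππ := Nat.mod_lt _ (by omega)
          have hcomm : j * ππ = ππ * j := Nat.mul_comm _ _
          have hkeq : k = aa + j * ππ + i := by omega
          obtain ⟨hS1, hz0, hzm⟩ := hforB i hilt
          have hjle : j ≤ (if i < rr then n + 1 else n) := by
            by_contra hcon
            push_neg at hcon
            by_cases hir : i < rr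
            · rw [if_pos hir] at hcon
              have : (n + 2) * ππ ≤ j * ππ := Nat.mul_le_mul_right ππ (by omega)
              have hexp2 : (n + 2) * ππ = ππ + (n + 1) * ππ := by ring
              omega
            · rw [if_neg hir] at hcon
              have : (n + 1) * ππ ≤ j * ππ := Nat.mul_le_mul_right ππ (by omega)
              omega
          have hzmm : zoneCond x (v 0)
              ((v 1 : ℤ) + (δ s y).2 + FF δ s x y (aa + i)
                + ((if i < rr then n + 1 else n : ℕ) : ℤ) * DD) := by
            by_cases hir : i < rr
            · rw [if_pos hir]
              rw [if_pos hir] at hzm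
              exact zone_congr hzm (by push_cast; ring)
            · rw [if_neg hir]
              rw [if_neg hir] at hzm
              exact zone_congr hzm (by push_cast; ring)
          have hint := zone_interp ((v 1 : ℤ) + (δ s y).2 + FF δ s x y (aa + i)) DD
            (if i < rr then n + 1 else n) j hjle hz0 hzmm
          constructor
          · rw [hkeq, hF j i]
            exact zone_congr hint (by ring)
          · rw [hkeq, hG j i]
            exact hS1


lemma sysdef_init4 (y : TapeSym) : SysDef {v : Fin 4 → ℕ | initCond y (v 0) (v 1)} := by
  cases y with
  | lmark =>
    refine sysdef_congr ?_ (sysdef_eq4 0 1 0 0 0)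
    ext v; simp only [Set.mem_setOf_eq, initCond]; omega
  | a =>
    show SysDef {v : Fin 4 → ℕ | 1 ≤ v 1 ∧ v 1 ≤ v 0}
    refine sysdef_and ?_ ?_
    · refine sysdef_congr ?_ (sysdef_atom4 0 1 0 0 (-1))
      ext v; simp only [Set.mem_setOf_eq]; omega
    · refine sysdef_congr ?_ (sysdef_atom4 1 (-1) 0 0 0)
      ext v; simp only [Set.mem_setOf_eq]; omega
  | rmark =>
    refine sysdef_congr ?_ (sysdef_eq4 (-1) 1 0 0 (-1))
    ext v; simp only [Set.mem_setOf_eq, initCond]; omega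

lemma sysdef_zone4 (x : TapeSym) (e : ℤ) :
    SysDef {v : Fin 4 → ℕ | zoneCond x (v 0) ((v 1 : ℤ) + e)} := by
  cases x with
  | lmark =>
    refine sysdef_congr ?_ (sysdef_atom4 0 (-1) 0 0 (-1 - e))
    ext v; simp only [Set.mem_setOf_eq, zoneCond]; omega
  | a =>
    show SysDef {v : Fin 4 → ℕ | 1 ≤ (v 1 : ℤ) + e ∧ (v 1 : ℤ) + e ≤ (v 0 : ℤ)}
    refine sysdef_and ?_ ?_
    · refine sysdef_congr ?_ (sysdef_atom4 0 1 0 0 (e - 1))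
      ext v; simp only [Set.mem_setOf_eq]; omega
    · refine sysdef_congr ?_ (sysdef_atom4 1 (-1) 0 0 (-e))
      ext v; simp only [Set.mem_setOf_eq]; omega
  | rmark =>
    refine sysdef_congr ?_ (sysdef_atom4 (-1) 1 0 0 (e - 2))
    ext v; simp only [Set.mem_setOf_eq, zoneCond]; omega

lemma sysdef_init5 (y : TapeSym) :
    SysDef {w : V5 → ℕ | initCond y (w (Sum.inl 0)) (w (Sum.inl 1))} := by
  cases y with
  | lmark =>
    refine sysdef_congr ?_ (sysdef_eq5 0 1 0 0 0 0)
    ext w; simp only [Set.mem_setOf_eq, initCond]; omega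
  | a =>
    show SysDef {w : V5 → ℕ | 1 ≤ w (Sum.inl 1) ∧ w (Sum.inl 1) ≤ w (Sum.inl 0)}
    refine sysdef_and ?_ ?_
    · refine sysdef_congr ?_ (sysdef_atom5 0 1 0 0 0 (-1))
      ext w; simp only [Set.mem_setOf_eq]; omega
    · refine sysdef_congr ?_ (sysdef_atom5 1 (-1) 0 0 0 0)
      ext w; simp only [Set.mem_setOf_eq]; omega
  | rmark =>
    refine sysdef_congr ?_ (sysdef_eq5 (-1) 1 0 0 0 (-1))
    ext w; simp only [Set.mem_setOf_eq, initCond]; omega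

lemma sysdef_zone5 (x : TapeSym) (e : ℤ) :
    SysDef {w : V5 → ℕ | zoneCond x (w (Sum.inl 0)) ((w (Sum.inl 1) : ℤ) + e)} := by
  cases x with
  | lmark =>
    refine sysdef_congr ?_ (sysdef_atom5 0 (-1) 0 0 0 (-1 - e))
    ext w; simp only [Set.mem_setOf_eq, zoneCond]; omega
  | a =>
    show SysDef {w : V5 → ℕ |
      1 ≤ (w (Sum.inl 1) : ℤ) + e ∧ (w (Sum.inl 1) : ℤ) + e ≤ (w (Sum.inl 0) : ℤ)}
    refine sysdef_and ?_ ?_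
    · refine sysdef_congr ?_ (sysdef_atom5 0 1 0 0 0 (e - 1))
      ext w; simp only [Set.mem_setOf_eq]; omega
    · refine sysdef_congr ?_ (sysdef_atom5 1 (-1) 0 0 0 (-e))
      ext w; simp only [Set.mem_setOf_eq]; omega
  | rmark =>
    refine sysdef_congr ?_ (sysdef_atom5 (-1) 1 0 0 0 (e - 2))
    ext w; simp only [Set.mem_setOf_eq, zoneCond]; omega

lemma sysdef_zone5n (x : TapeSym) (e c4 : ℤ) :
    SysDef {w : V5 → ℕ |
      zoneCond x (w (Sum.inl 0)) ((w (Sum.inl 1) : ℤ) + e + c4 * (w (Sum.inr ()) : ℤ))} := by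
  cases x with
  | lmark =>
    refine sysdef_congr ?_ (sysdef_atom5 0 (-1) 0 0 (-c4) (-1 - e))
    ext w; simp only [Set.mem_setOf_eq, zoneCond]
    constructor <;> intro h <;> linarith
  | a =>
    show SysDef {w : V5 → ℕ |
      1 ≤ (w (Sum.inl 1) : ℤ) + e + c4 * (w (Sum.inr ()) : ℤ) ∧
      (w (Sum.inl 1) : ℤ) + e + c4 * (w (Sum.inr ()) : ℤ) ≤ (w (Sum.inl 0) : ℤ)}
    refine sysdef_and ?_ ?_
    · refine sysdef_congr ?_ (sysdef_atom5 0 1 0 0 c4 (e - 1))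
      ext w; simp only [Set.mem_setOf_eq]
      constructor <;> intro h <;> linarith
    · refine sysdef_congr ?_ (sysdef_atom5 1 (-1) 0 0 (-c4) (-e))
      ext w; simp only [Set.mem_setOf_eq]
      constructor <;> intro h <;> linarith
  | rmark =>
    refine sysdef_congr ?_ (sysdef_atom5 (-1) 1 0 0 c4 (e - 2))
    ext w; simp only [Set.mem_setOf_eq, zoneCond]
    constructor <;> intro h <;> linarith

lemma sysdef_T0' : SysDef (T0Set s s') := by
  unfold T0Set
  refine sysdef_and ?_ (sysdef_and ?_ (sysdef_and ?_ (sysdef_and (sysdef_const _) ?_)))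
  · refine sysdef_congr ?_ (sysdef_eq4 0 0 0 1 0)
    ext v; simp only [Set.mem_setOf_eq]; omega
  · refine sysdef_congr ?_ (sysdef_atom4 1 (-1) 0 0 1)
    ext v; simp only [Set.mem_setOf_eq]; omega
  · refine sysdef_congr ?_ (sysdef_atom4 1 0 (-1) 0 1)
    ext v; simp only [Set.mem_setOf_eq]; omega
  · refine sysdef_congr ?_ (sysdef_eq4 0 1 (-1) 0 0)
    ext v; simp only [Set.mem_setOf_eq]; omega

lemma sysdef_T1' (y : TapeSym) : SysDef (T1Set δ s s' y) := by
  unfold T1Set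
  refine sysdef_and ?_ (sysdef_and ?_ (sysdef_and ?_ (sysdef_and (sysdef_init4 y)
    (sysdef_and (sysdef_const _) ?_))))
  · refine sysdef_congr ?_ (sysdef_eq4 0 0 0 1 (-1))
    ext v; simp only [Set.mem_setOf_eq]; omega
  · refine sysdef_congr ?_ (sysdef_atom4 1 (-1) 0 0 1)
    ext v; simp only [Set.mem_setOf_eq]; omega
  · refine sysdef_congr ?_ (sysdef_atom4 1 0 (-1) 0 1)
    ext v; simp only [Set.mem_setOf_eq]; omega
  · refine sysdef_congr ?_ (sysdef_eq4 0 1 (-1) 0 ((δ s y).2))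
    ext v; simp only [Set.mem_setOf_eq]; omega

lemma sysdef_small' (x y : TapeSym) (M : ℕ) : SysDef (SmallSet δ S s s' x y M) := by
  unfold SmallSet
  refine sysdef_and ?_ (sysdef_and ?_ (sysdef_and (sysdef_init4 y)
    (sysdef_and (sysdef_const _) (sysdef_and ?_ (sysdef_and (sysdef_const _)
      (sysdef_and ?_ ?_))))))
  · refine sysdef_congr ?_ (sysdef_atom4 1 (-1) 0 0 1)
    ext v; simp only [Set.mem_setOf_eq]; omega
  · refine sysdef_congr ?_ (sysdef_atom4 1 0 (-1) 0 1)
    ext v; simp only [Set.mem_setOf_eq]; omega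
  · refine sysdef_congr ?_ (sysdef_eq4 0 0 0 1 (-((M : ℤ) + 1)))
    ext v; simp only [Set.mem_setOf_eq]; omega
  · refine sysdef_congr ?_ (sysdef_eq4 0 1 (-1) 0 ((δ s y).2 + FF δ s x y M))
    ext v; simp only [Set.mem_setOf_eq]; omega
  · refine sysdef_congr
      (S := {v : Fin 4 → ℕ | ∀ k, k < M →
        zoneCond x (v 0) ((v 1 : ℤ) + (δ s y).2 + FF δ s x y k) ∧ GG δ s x y k ∉ S}) rfl ?_
    refine sysdef_forall_lt M (fun k => {v : Fin 4 → ℕ |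
      zoneCond x (v 0) ((v 1 : ℤ) + (δ s y).2 + FF δ s x y k) ∧ GG δ s x y k ∉ S}) ?_
    intro k
    refine sysdef_and ?_ (sysdef_const _)
    refine sysdef_congr ?_ (sysdef_zone4 x ((δ s y).2 + FF δ s x y k))
    ext v; simp only [Set.mem_setOf_eq]
    constructor <;> intro h <;> [skip; skip] <;>
      · have he : (v 1 : ℤ) + ((δ s y).2 + FF δ s x y k)
            = (v 1 : ℤ) + (δ s y).2 + FF δ s x y k := by ring
        first
          | (rw [he]; exact h)
          | (rw [← he]; exact h)
        
lemma gsemi_big' (x y : TapeSym) (aa ππ r : ℕ) (DD : ℤ) :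
    GSemi (BigSet δ S s s' x y aa ππ r DD) := by
  have himg : BigSet δ S s s' x y aa ππ r DD =
      (fun w : V5 → ℕ => w ∘ Sum.inl) '' {w : V5 → ℕ |
        w (Sum.inl 1) ≤ w (Sum.inl 0) + 1 ∧ w (Sum.inl 2) ≤ w (Sum.inl 0) + 1 ∧
        initCond y (w (Sum.inl 0)) (w (Sum.inl 1)) ∧
        w (Sum.inl 3) = aa + ππ + r + 1 + w (Sum.inr ()) * ππ ∧
        GG δ s x y (aa + r) = s' ∧
        (w (Sum.inl 2) : ℤ) = (w (Sum.inl 1) : ℤ) + (δ s y).2 + FF δ s x y (aa + r) + DD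
          + (w (Sum.inr ()) : ℤ) * DD ∧
        (∀ k, k < aa →
          zoneCond x (w (Sum.inl 0)) ((w (Sum.inl 1) : ℤ) + (δ s y).2 + FF δ s x y k) ∧
          GG δ s x y k ∉ S) ∧
        (∀ i, i < ππ → GG δ s x y (aa + i) ∉ S ∧
          zoneCond x (w (Sum.inl 0)) ((w (Sum.inl 1) : ℤ) + (δ s y).2 + FF δ s x y (aa + i)) ∧
          zoneCond x (w (Sum.inl 0)) ((w (Sum.inl 1) : ℤ) + (δ s y).2 + FF δ s x y (aa + i)
            + (if i < r then DD else 0) + (w (Sum.inr ()) : ℤ) * DD))} := by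
    ext v
    simp only [BigSet, Set.mem_setOf_eq, Set.mem_image]
    constructor
    · rintro ⟨h1, h2, h3, n, h4, h5, h6, h7, h8⟩
      refine ⟨Sum.elim v (fun _ => n), ?_, by funext i; rfl⟩
      refine ⟨h1, h2, h3, ?_, h5, ?_, h7, ?_⟩
      · simpa using h4
      · simpa using h6
      · intro i hi
        obtain ⟨ha, hb, hc⟩ := h8 i hi
        exact ⟨ha, hb, by simpa using hc⟩
    · rintro ⟨w, ⟨h1, h2, h3, h4, h5, h6, h7, h8⟩, rfl⟩
      refine ⟨h1, h2, h3, w (Sum.inr ()), h4, h5, h6, h7, ?_⟩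
      intro i hi
      obtain ⟨ha, hb, hc⟩ := h8 i hi
      exact ⟨ha, hb, hc⟩
  rw [himg]
  refine gsemi_image_precomp _ (SysDef.gsemi ?_)
  refine sysdef_and ?_ (sysdef_and ?_ (sysdef_and (sysdef_init5 y)
    (sysdef_and ?_ (sysdef_and (sysdef_const _) (sysdef_and ?_ (sysdef_and ?_ ?_))))))
  · refine sysdef_congr ?_ (sysdef_atom5 1 (-1) 0 0 0 1)
    ext w; simp only [Set.mem_setOf_eq]; omega
  · refine sysdef_congr ?_ (sysdef_atom5 1 0 (-1) 0 0 1)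
    ext w; simp only [Set.mem_setOf_eq]; omega
  · refine sysdef_congr ?_ (sysdef_eq5 0 0 0 1 (-(ππ : ℤ)) (-((aa : ℤ) + ππ + r + 1)))
    ext w; simp only [Set.mem_setOf_eq]
    constructor
    · intro h
      have h' : (w (Sum.inl 3) : ℤ) = (aa : ℤ) + ππ + r + 1 + (w (Sum.inr ()) : ℤ) * ππ := by
        exact_mod_cast h
      linarith
    · intro h
      have h' : (w (Sum.inl 3) : ℤ) = (aa : ℤ) + ππ + r + 1 + (w (Sum.inr ()) : ℤ) * ππ := by
        linarith
      exact_mod_cast h'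
  · refine sysdef_congr ?_ (sysdef_eq5 0 1 (-1) 0 DD ((δ s y).2 + FF δ s x y (aa + r) + DD))
    ext w; simp only [Set.mem_setOf_eq]
    constructor <;> intro h <;> linarith
  · refine sysdef_congr
      (S := {w : V5 → ℕ | ∀ k, k < aa →
        zoneCond x (w (Sum.inl 0)) ((w (Sum.inl 1) : ℤ) + (δ s y).2 + FF δ s x y k) ∧
        GG δ s x y k ∉ S}) rfl ?_
    refine sysdef_forall_lt aa _ ?_
    intro k
    refine sysdef_and ?_ (sysdef_const _)
    refine sysdef_congr ?_ (sysdef_zone5 x ((δ s y).2 + FF δ s x y k))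
    ext w; simp only [Set.mem_setOf_eq]
    rw [show (w (Sum.inl 1) : ℤ) + ((δ s y).2 + FF δ s x y k)
      = (w (Sum.inl 1) : ℤ) + (δ s y).2 + FF δ s x y k from by ring]
  · refine sysdef_congr
      (S := {w : V5 → ℕ | ∀ i, i < ππ → GG δ s x y (aa + i) ∉ S ∧
        zoneCond x (w (Sum.inl 0)) ((w (Sum.inl 1) : ℤ) + (δ s y).2 + FF δ s x y (aa + i)) ∧
        zoneCond x (w (Sum.inl 0)) ((w (Sum.inl 1) : ℤ) + (δ s y).2 + FF δ s x y (aa + i)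
          + (if i < r then DD else 0) + (w (Sum.inr ()) : ℤ) * DD)}) rfl ?_
    refine sysdef_forall_lt ππ _ ?_
    intro i
    refine sysdef_and (sysdef_const _) (sysdef_and ?_ ?_)
    · refine sysdef_congr ?_ (sysdef_zone5 x ((δ s y).2 + FF δ s x y (aa + i)))
      ext w; simp only [Set.mem_setOf_eq]
      rw [show (w (Sum.inl 1) : ℤ) + ((δ s y).2 + FF δ s x y (aa + i))
        = (w (Sum.inl 1) : ℤ) + (δ s y).2 + FF δ s x y (aa + i) from by ring]
    · refine sysdef_congr ?_
        (sysdef_zone5n x ((δ s y).2 + FF δ s x y (aa + i) + (if i < r then DD else 0)) DD)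
      ext w; simp only [Set.mem_setOf_eq]
      rw [show (w (Sum.inl 1) : ℤ)
          + ((δ s y).2 + FF δ s x y (aa + i) + (if i < r then DD else 0))
          + DD * (w (Sum.inr ()) : ℤ)
        = (w (Sum.inl 1) : ℤ) + (δ s y).2 + FF δ s x y (aa + i)
          + (if i < r then DD else 0) + (w (Sum.inr ()) : ℤ) * DD from by ring]

lemma gsemi_target [Fintype Q]
    (hδ : ∀ q x, (δ q x).2 = -1 ∨ (δ q x).2 = 0 ∨ (δ q x).2 = 1) :
    GSemi (Target δ S s s') := by
  rw [target_decomp δ S s s' hδ]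
  refine gsemi_union (gsemi_union (sysdef_T0' s s').gsemi
    (gsemi_iUnion fun y => (sysdef_T1' δ s s' y).gsemi)) ?_
  refine gsemi_iUnion fun x => gsemi_iUnion fun y => ?_
  obtain ⟨i, j, hne, heq⟩ :=
    Finite.exists_ne_map_eq_of_infinite (fun n : ℕ => GG δ s x y n)
  have key : ∀ aa ππ : ℕ, 1 ≤ ππ → GG δ s x y (aa + ππ) = GG δ s x y aa →
      GSemi (CaseSet δ S s s' x y) := by
    intro aa ππ hππ hper
    rw [case_decomp δ S s s' x y aa ππ hππ hper]
    exact gsemi_union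
      (gsemi_iUnion fun M => (sysdef_small' δ S s s' x y M).gsemi)
      (gsemi_iUnion fun r => gsemi_big' δ S s s' x y aa ππ (r + 1) _)
  rcases Nat.lt_or_ge i j with hij | hij
  · exact key i (j - i) (by omega) (by rw [show i + (j - i) = j by omega]; exact heq.symm)
  · have hij2 : j < i := by omega
    exact key j (i - j) (by omega) (by rw [show j + (i - j) = i by omega]; exact heq)

end Main

end Stmt7Aux

/-- for fixed states `s, s'` and a set `S` of forbidden intermediate states,
the relation Reach_S(N, p, p', T) (reaching `(s', p')` from `(s, p)` at time `T` on the
tape `{0,…,N+1}` without visiting the endmarkers nor `S` strictly in between) is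
Presburger-definable, i.e. semilinear in `(N, p, p', T)`. -/
theorem stmt7 {Q : Type} [Fintype Q] (δ : Q → TapeSym → Q × ℤ)
    (hδ : ∀ q x, (δ q x).2 = -1 ∨ (δ q x).2 = 0 ∨ (δ q x).2 = 1)
    (S : Set Q) (s s' : Q) :
    IsSemilinearSet' {v : Fin 4 → ℕ |
      v 1 ≤ v 0 + 1 ∧ v 2 ≤ v 0 + 1 ∧
      trun δ (v 0) s (v 1) (v 3) = (s', (v 2 : ℤ)) ∧
      ∀ t, 0 < t → t < v 3 →
        (trun δ (v 0) s (v 1) t).2 ≠ 0 ∧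
        (trun δ (v 0) s (v 1) t).2 ≠ (v 0 : ℤ) + 1 ∧
        (trun δ (v 0) s (v 1) t).1 ∉ S} := by
  exact Stmt7Aux.gsemi_target δ S s s' hδ
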